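/- arXiv:1405.0150 — 2 statements merged into one kernel-verified Lean document; each statement's English description precedes it below -/
import Mathlib

section
/- If G is a finite p-group of order p^n with n ≥ 2, then the derived length of G is at most 1 + log₂(n - 1). -/
open Subgroup hiding lowerCentralSeries lowerCentralSeries_antitone lowerCentralSeries_succ_eq_bot
  lowerCentralSeries_one lowerCentralSeries.map

universe u

/-- Three subgroups lemma relative to a normal subgroup. -/
lemma aux_commutator_commutator_le_of_rotate {G : Type*} [Group G] {H₁ H₂ H₃ N : Subgroup G}
    [N.Normal] (h1 : ⁅⁅H₂, H₃⁆, H₁⁆ ≤ N) (h2 : ⁅⁅H₃, H₁⁆, H₂⁆ ≤ N) :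
    ⁅⁅H₁, H₂⁆, H₃⁆ ≤ N := by
  have key : ∀ {K : Subgroup G}, K ≤ N ↔ K.map (QuotientGroup.mk' N) = ⊥ := by
    intro K
    rw [Subgroup.map_eq_bot_iff, QuotientGroup.ker_mk']
  rw [key, Subgroup.map_commutator, Subgroup.map_commutator] at h1 h2 ⊢
  exact Subgroup.commutator_commutator_eq_bot_of_rotate h1 h2

lemma aux_lcs_commutator_le {G : Type*} [Group G] (n m : ℕ) :
    ⁅Subgroup.lowerCentralSeries (⊤ : Subgroup G) m, Subgroup.lowerCentralSeries (⊤ : Subgroup G) n⁆ ≤ Subgroup.lowerCentralSeries (⊤ : Subgroup G) (m + n + 1) := by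
  induction n generalizing m with
  | zero => exact le_of_eq rfl
  | succ n ih =>
    rw [Subgroup.commutator_comm]
    show ⁅⁅Subgroup.lowerCentralSeries (⊤ : Subgroup G) n, ⊤⁆, Subgroup.lowerCentralSeries (⊤ : Subgroup G) m⁆ ≤ _
    apply aux_commutator_commutator_le_of_rotate
    · rw [Subgroup.commutator_comm (⊤ : Subgroup G) (Subgroup.lowerCentralSeries (⊤ : Subgroup G) m)]
      have := ih (m + 1)
      rwa [show m + 1 + n + 1 = m + (n + 1) + 1 by omega] at this
    · exact le_trans (Subgroup.commutator_mono (ih m) le_rfl) (le_of_eq rfl)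

lemma aux_derivedSeries_le_lcs {G : Type*} [Group G] (i : ℕ) :
    derivedSeries G i ≤ Subgroup.lowerCentralSeries (⊤ : Subgroup G) (2 ^ i - 1) := by
  induction i with
  | zero => exact le_of_eq rfl
  | succ i ih =>
    calc derivedSeries G (i + 1) = ⁅derivedSeries G i, derivedSeries G i⁆ := rfl
      _ ≤ ⁅Subgroup.lowerCentralSeries (⊤ : Subgroup G) (2 ^ i - 1), Subgroup.lowerCentralSeries (⊤ : Subgroup G) (2 ^ i - 1)⁆ :=
          Subgroup.commutator_mono ih ih
      _ ≤ Subgroup.lowerCentralSeries (⊤ : Subgroup G) ((2 ^ i - 1) + (2 ^ i - 1) + 1) := aux_lcs_commutator_le _ _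
      _ = Subgroup.lowerCentralSeries (⊤ : Subgroup G) (2 ^ (i + 1) - 1) := by
          congr 1
          have h : 1 ≤ 2 ^ i := Nat.one_le_pow _ _ (by norm_num)
          rw [pow_succ]
          omega

/-- A group of order `p ^ n` has nilpotency class at most `max (n - 1) 1`. -/
lemma aux_pgroup_lcs_eq_bot {p : ℕ} [Fact p.Prime] :
    ∀ (n : ℕ) (G : Type u) [Group G] [Finite G], Nat.card G = p ^ n →
      Subgroup.lowerCentralSeries (⊤ : Subgroup G) (max (n - 1) 1) = ⊥ := by
  intro n
  induction n using Nat.strong_induction_on with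
  | _ n ih =>
    intro G _ _ hG
    have hp : p.Prime := Fact.out
    have habc : (∀ a b : G, a * b = b * a) → Subgroup.lowerCentralSeries (⊤ : Subgroup G) (max (n - 1) 1) = ⊥ := by
      intro hc
      have h1 : Subgroup.lowerCentralSeries (⊤ : Subgroup G) 1 = ⊥ := by
        rw [lowerCentralSeries_one, commutator_def,
          Subgroup.commutator_eq_bot_iff_le_centralizer]
        intro x _
        rw [Subgroup.mem_centralizer_iff]
        intro y _
        exact hc y x
      exact le_bot_iff.mp (h1 ▸ lowerCentralSeries_antitone _ (le_max_right (n - 1) 1))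
    rcases le_or_gt n 1 with hn1 | hn1
    · interval_cases n
      · haveI : Subsingleton G :=
          (Nat.card_eq_one_iff_unique.mp (by simpa using hG)).1
        exact habc fun a b => Subsingleton.elim _ _
      · haveI : IsCyclic G := isCyclic_of_prime_card (by simpa using hG)
        exact habc fun a b => (IsCyclic.commGroup (α := G)).mul_comm a b
    · obtain ⟨m, hm⟩ :=
        ((IsPGroup.of_card hG).to_quotient (Subgroup.center G)).exists_card_eq
      haveI : Nontrivial G := by
        have : 1 < Nat.card G := by
          rw [hG]; exact Nat.one_lt_pow (by omega) hp.one_lt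
        exact Finite.one_lt_card_iff_nontrivial.mp this
      haveI : Nontrivial (Subgroup.center G) :=
        IsPGroup.center_nontrivial (IsPGroup.of_card hG)
      have hmn : m < n := by
        have hc := Subgroup.card_eq_card_quotient_mul_card_subgroup (Subgroup.center G)
        rw [hG, hm] at hc
        have h2 : 2 ≤ Nat.card (Subgroup.center G) := Finite.one_lt_card
        have : p ^ m < p ^ n := by nlinarith [pow_pos hp.pos m]
        exact (pow_lt_pow_iff_right₀ hp.one_lt).mp this
      rcases le_or_gt m 1 with hm1 | hm1
      · haveI : IsCyclic (G ⧸ Subgroup.center G) := by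
          rcases Nat.le_one_iff_eq_zero_or_eq_one.mp hm1 with rfl | rfl
          · haveI : Subsingleton (G ⧸ Subgroup.center G) :=
              (Nat.card_eq_one_iff_unique.mp (by simpa using hm)).1
            infer_instance
          · exact isCyclic_of_prime_card (by simpa using hm)
        exact habc
          (commGroupOfCyclicCenterQuotient (QuotientGroup.mk' (Subgroup.center G))
            (le_of_eq (QuotientGroup.ker_mk' _))).mul_comm
      · -- main inductive step
        have hq := ih m hmn (G ⧸ Subgroup.center G) hm
        set k := max (m - 1) 1 with hk
        have hcen : Subgroup.lowerCentralSeries (⊤ : Subgroup G) k ≤ Subgroup.center G := by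
          have hmap := lowerCentralSeries.map (QuotientGroup.mk' (Subgroup.center G)) k
          rw [hq] at hmap
          have := (Subgroup.map_eq_bot_iff _).mp (le_bot_iff.mp hmap)
          rwa [QuotientGroup.ker_mk'] at this
        have hbot : Subgroup.lowerCentralSeries (⊤ : Subgroup G) (k + 1) = ⊥ :=
          lowerCentralSeries_succ_eq_bot _ hcen
        have hle : k + 1 ≤ max (n - 1) 1 := by omega
        exact le_bot_iff.mp (hbot ▸ lowerCentralSeries_antitone _ hle)

/-- If `G` is a finite `p`-group of order `p ^ n` with `n ≥ 2`, then the derived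
length of `G` is at most `1 + log₂ (n - 1)`. -/
theorem derived_length_le_one_add_logb_two
    (p n : ℕ) (hp : p.Prime) (G : Type*) [Group G] [Finite G]
    (hG : Nat.card G = p ^ n) (hn : 2 ≤ n) (d : ℕ)
    (hd : derivedSeries G d = ⊥) (hmin : ∀ k < d, derivedSeries G k ≠ ⊥) :
    (d : ℝ) ≤ 1 + Real.logb 2 ((n : ℝ) - 1) := by
  haveI : Fact p.Prime := ⟨hp⟩
  have hn1 : (1 : ℝ) ≤ (n : ℝ) - 1 := by
    have : (2 : ℝ) ≤ (n : ℝ) := by exact_mod_cast hn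
    linarith
  rcases Nat.eq_zero_or_pos d with rfl | hd0
  · have := Real.logb_nonneg (b := 2) one_lt_two hn1
    push_cast
    linarith
  · have hne := hmin (d - 1) (by omega)
    have hle : derivedSeries G (d - 1) ≤ Subgroup.lowerCentralSeries (⊤ : Subgroup G) (2 ^ (d - 1) - 1) :=
      aux_derivedSeries_le_lcs _
    have hlcs : Subgroup.lowerCentralSeries (⊤ : Subgroup G) (2 ^ (d - 1) - 1) ≠ ⊥ := fun h =>
      hne (le_bot_iff.mp (hle.trans h.le))
    have hbot : Subgroup.lowerCentralSeries (⊤ : Subgroup G) (max (n - 1) 1) = ⊥ := aux_pgroup_lcs_eq_bot n G hG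
    have hlt : 2 ^ (d - 1) - 1 < max (n - 1) 1 := by
      by_contra h
      push_neg at h
      exact hlcs (le_bot_iff.mp (hbot ▸ lowerCentralSeries_antitone _ h))
    have h2d : 2 ^ (d - 1) ≤ n - 1 := by
      have h1 : 1 ≤ 2 ^ (d - 1) := Nat.one_le_pow _ _ (by norm_num)
      omega
    have hreal : ((2 : ℝ)) ^ (d - 1) ≤ (n : ℝ) - 1 := by
      have := (Nat.cast_le (α := ℝ)).mpr h2d
      rw [Nat.cast_sub (by omega)] at this
      push_cast at this
      linarith
    have hlog : ((d : ℝ) - 1) ≤ Real.logb 2 ((n : ℝ) - 1) := by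
      have hd1 : ((d - 1 : ℕ) : ℝ) = (d : ℝ) - 1 := by
        rw [Nat.cast_sub (by omega)]; norm_num
      calc (d : ℝ) - 1 = Real.logb 2 ((2 : ℝ) ^ (d - 1)) := by
            rw [Real.logb_pow, Real.logb_self_eq_one one_lt_two, mul_one, hd1]
          _ ≤ Real.logb 2 ((n : ℝ) - 1) :=
            Real.logb_le_logb_of_le one_lt_two (by positivity) hreal
    linarith
end

section
/- Every finite $p$-group of order $p^n$ has derived length at most 1 + log₂ n for n ≥ 1; consequently, a soluble bound d for a favourable presentation of G built on a composition series refining the derived series satisfies d ≤ 1 + log₂(n-1) when n ≥ 2. -/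
open Subgroup

private lemma three_subgroups_aux {G : Type*} [Group G] (A B C N : Subgroup G) [N.Normal]
    (h1 : ⁅⁅B, C⁆, A⁆ ≤ N) (h2 : ⁅⁅C, A⁆, B⁆ ≤ N) : ⁅⁅A, B⁆, C⁆ ≤ N := by
  have key : ∀ X Y Z : Subgroup G, ⁅⁅X, Y⁆, Z⁆ ≤ N ↔
      ⁅⁅X.map (QuotientGroup.mk' N), Y.map (QuotientGroup.mk' N)⁆,
        Z.map (QuotientGroup.mk' N)⁆ = ⊥ := by
    intro X Y Z
    rw [← Subgroup.map_commutator, ← Subgroup.map_commutator, Subgroup.map_eq_bot_iff,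
      QuotientGroup.ker_mk']
  rw [key]
  exact Subgroup.commutator_commutator_eq_bot_of_rotate ((key _ _ _).mp h1) ((key _ _ _).mp h2)

private lemma lcs_commutator_le {G : Type*} [Group G] (a : ℕ) : ∀ b : ℕ,
    ⁅(⊤ : Subgroup G).lowerCentralSeries a, (⊤ : Subgroup G).lowerCentralSeries b⁆ ≤ (⊤ : Subgroup G).lowerCentralSeries (a + b + 1) := by
  induction a with
  | zero =>
    intro b
    have h0 : (0:ℕ) + b + 1 = b + 1 := by omega
    rw [Subgroup.lowerCentralSeries_zero, Subgroup.commutator_comm, h0]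
    exact le_of_eq rfl
  | succ a ih =>
    intro b
    have hA : (⊤ : Subgroup G).lowerCentralSeries (a + 1) = ⁅(⊤ : Subgroup G).lowerCentralSeries a, ⊤⁆ := rfl
    rw [hA]
    have hidx : a + (b + 1) + 1 = a + 1 + b + 1 := by omega
    apply three_subgroups_aux
    · rw [Subgroup.commutator_comm (⊤ : Subgroup G)]
      have : ⁅(⊤ : Subgroup G).lowerCentralSeries (b + 1), (⊤ : Subgroup G).lowerCentralSeries a⁆ ≤
          (⊤ : Subgroup G).lowerCentralSeries (a + 1 + b + 1) := by
        rw [Subgroup.commutator_comm, ← hidx]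
        exact ih (b + 1)
      exact this
    · calc ⁅⁅(⊤ : Subgroup G).lowerCentralSeries b, (⊤ : Subgroup G).lowerCentralSeries a⁆, (⊤ : Subgroup G)⁆
          ≤ ⁅(⊤ : Subgroup G).lowerCentralSeries (a + b + 1), (⊤ : Subgroup G)⁆ := by
            apply Subgroup.commutator_mono _ le_rfl
            rw [Subgroup.commutator_comm]; exact ih b
        _ = (⊤ : Subgroup G).lowerCentralSeries (a + b + 2) := rfl
        _ = (⊤ : Subgroup G).lowerCentralSeries (a + 1 + b + 1) := by congr 1

private lemma derived_le_lcs {G : Type*} [Group G] (i : ℕ) :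
    derivedSeries G i ≤ (⊤ : Subgroup G).lowerCentralSeries (2 ^ i - 1) := by
  induction i with
  | zero => exact le_of_eq rfl
  | succ i ih =>
    have h1 : (1 : ℕ) ≤ 2 ^ i := Nat.one_le_two_pow
    calc derivedSeries G (i + 1) = ⁅derivedSeries G i, derivedSeries G i⁆ := rfl
      _ ≤ ⁅(⊤ : Subgroup G).lowerCentralSeries (2 ^ i - 1), (⊤ : Subgroup G).lowerCentralSeries (2 ^ i - 1)⁆ :=
          Subgroup.commutator_mono ih ih
      _ ≤ (⊤ : Subgroup G).lowerCentralSeries ((2 ^ i - 1) + (2 ^ i - 1) + 1) := lcs_commutator_le _ _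
      _ = (⊤ : Subgroup G).lowerCentralSeries (2 ^ (i + 1) - 1) := by congr 1; rw [pow_succ]; omega

universe u in
private lemma pgroup_class_le {p : ℕ} (hp : p.Prime) : ∀ (n : ℕ) (G : Type u) [Group G] [Finite G],
    Nat.card G = p ^ n → (⊤ : Subgroup G).lowerCentralSeries (max 1 (n - 1)) = ⊥ := by
  intro n
  induction n using Nat.strong_induction_on with
  | _ n ih =>
    intro G _ _ hG
    haveI : Fact p.Prime := ⟨hp⟩
    have hpG : IsPGroup p G := IsPGroup.of_card hG
    haveI : Group.IsNilpotent G := hpG.isNilpotent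
    rw [Subgroup.lowerCentralSeries_eq_bot_iff_nilpotencyClass_le]
    rcases Nat.eq_zero_or_pos n with rfl | hn
    · have : Nat.card G = 1 := by simpa using hG
      haveI : Subsingleton G := (Nat.card_eq_one_iff_unique.mp this).1
      simp [nilpotencyClass_zero_iff_subsingleton.mpr this]
    haveI : Nontrivial G := by
      rw [← Finite.one_lt_card_iff_nontrivial, hG]
      exact Nat.one_lt_pow (by omega) hp.one_lt
    haveI : Nontrivial (Subgroup.center G) := IsPGroup.center_nontrivial hpG
    -- card of the quotient by the center
    obtain ⟨m, hm⟩ := (hpG.to_quotient (Subgroup.center G)).exists_card_eq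
    obtain ⟨z, hz⟩ := (hpG.to_subgroup (Subgroup.center G)).exists_card_eq
    have hz1 : 1 ≤ z := by
      rcases Nat.eq_zero_or_pos z with rfl | h
      · exfalso
        have : Nat.card (Subgroup.center G) = 1 := by simpa using hz
        exact (Finite.one_lt_card_iff_nontrivial.mpr ‹_›).ne' this
      · exact h
    have hcard : p ^ m * p ^ z = p ^ n := by
      rw [← hm, ← hz, ← hG]
      exact (Subgroup.card_eq_card_quotient_mul_card_subgroup (Subgroup.center G)).symm
    have hmn : m + z = n := by
      have : p ^ (m + z) = p ^ n := by rw [pow_add]; exact hcard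
      exact Nat.pow_right_injective hp.two_le this
    have hclass : Group.nilpotencyClass G ≤
        Group.nilpotencyClass (G ⧸ Subgroup.center G) + 1 := by
      have := nilpotencyClass_quotient_center (G := G)
      omega
    rcases lt_or_ge m 2 with hm2 | hm2
    · -- quotient is trivial or of prime order, hence cyclic, hence G abelian
      have hcomm : ∀ a b : G, a * b = b * a := by
        interval_cases m
        · haveI : Subsingleton (G ⧸ Subgroup.center G) := by
            have : Nat.card (G ⧸ Subgroup.center G) = 1 := by simpa using hm
            exact (Nat.card_eq_one_iff_unique.mp this).1
          haveI : IsCyclic (G ⧸ Subgroup.center G) := by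
            constructor; exact ⟨1, fun x => by simp [Subsingleton.elim x 1]⟩
          exact commutative_of_cyclic_center_quotient (QuotientGroup.mk' (Subgroup.center G))
            (by rw [QuotientGroup.ker_mk'])
        · haveI : IsCyclic (G ⧸ Subgroup.center G) := isCyclic_of_prime_card (by simpa using hm)
          exact commutative_of_cyclic_center_quotient (QuotientGroup.mk' (Subgroup.center G))
            (by rw [QuotientGroup.ker_mk'])
      have : Group.nilpotencyClass G ≤ 1 := by
        rw [← Subgroup.lowerCentralSeries_eq_bot_iff_nilpotencyClass_le, eq_bot_iff,
          Subgroup.top_lowerCentralSeries_one, _root_.commutator_def, Subgroup.commutator_le]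
        intro g₁ _ g₂ _
        rw [commutatorElement_eq_one_iff_mul_comm.mpr (hcomm g₁ g₂)]
        exact Subgroup.one_mem ⊥
      exact le_trans this (le_max_left _ _)
    · -- m ≥ 2 : apply the induction hypothesis to the quotient
      have hmlt : m < n := by omega
      have hq := ih m hmlt (G ⧸ Subgroup.center G) hm
      rw [Subgroup.lowerCentralSeries_eq_bot_iff_nilpotencyClass_le] at hq
      have : max 1 (m - 1) = m - 1 := by omega
      rw [this] at hq
      calc Group.nilpotencyClass G ≤ Group.nilpotencyClass (G ⧸ Subgroup.center G) + 1 := hclass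
        _ ≤ (m - 1) + 1 := by omega
        _ ≤ max 1 (n - 1) := by omega

/-- Every finite p-group of order `p ^ n` has derived length at most
`1 + log₂ n` for `n ≥ 1`; consequently the derived length `d` satisfies
`d ≤ 1 + log₂ (n - 1)` when `n ≥ 2`. -/
theorem derived_length_bounds_of_pGroup
    (p n : ℕ) (hp : p.Prime) (G : Type*) [Group G] [Finite G]
    (hG : Nat.card G = p ^ n) (d : ℕ)
    (hd : derivedSeries G d = ⊥) (hmin : ∀ k < d, derivedSeries G k ≠ ⊥) :
    (1 ≤ n → (d : ℝ) ≤ 1 + Real.logb 2 n) ∧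
    (2 ≤ n → (d : ℝ) ≤ 1 + Real.logb 2 ((n : ℝ) - 1)) := by
  haveI : Fact p.Prime := ⟨hp⟩
  have hlcs := pgroup_class_le hp n G hG
  have key : ∀ i : ℕ, max 1 (n - 1) ≤ 2 ^ i - 1 → d ≤ i := by
    intro i hi
    by_contra h
    push_neg at h
    exact hmin i h (le_bot_iff.mp ((derived_le_lcs i).trans
      ((Subgroup.lowerCentralSeries_antitone ⊤ hi).trans hlcs.le)))
  -- the main bound for n ≥ 2
  have main : 2 ≤ n → (d : ℝ) ≤ 1 + Real.logb 2 ((n : ℝ) - 1) := by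
    intro h2
    set i := Nat.clog 2 n with hi_def
    have hdi : d ≤ i := by
      apply key
      have : n ≤ 2 ^ i := Nat.le_pow_clog (by norm_num) n
      omega
    have hip : 0 < i := Nat.clog_pos (by norm_num) h2
    have hpow : 2 ^ (i - 1) < n := Nat.pow_pred_clog_lt_self (by norm_num) (by omega)
    have hpowR : (2 : ℝ) ^ (i - 1) ≤ (n : ℝ) - 1 := by
      have h' : (2 : ℕ) ^ (i - 1) ≤ n - 1 := by omega
      have := Nat.cast_le (α := ℝ) |>.mpr h'
      push_cast at this
      rw [Nat.cast_sub (by omega : 1 ≤ n)] at this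
      push_cast at this
      linarith
    have hlogb : ((i - 1 : ℕ) : ℝ) ≤ Real.logb 2 ((n : ℝ) - 1) := by
      have h0 : (0 : ℝ) < (2 : ℝ) ^ (i - 1) := by positivity
      have := Real.logb_le_logb_of_le (by norm_num : (1:ℝ) < 2) h0 hpowR
      rwa [Real.logb_pow, Real.logb_self_eq_one (by norm_num), mul_one] at this
    have hcast : ((i - 1 : ℕ) : ℝ) = (i : ℝ) - 1 := by
      rw [Nat.cast_sub (by omega : 1 ≤ i)]; norm_num
    have : (d : ℝ) ≤ (i : ℝ) := Nat.cast_le.mpr hdi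
    linarith [hcast ▸ hlogb]
  constructor
  · intro h1
    rcases eq_or_lt_of_le h1 with hn1 | h2
    · -- n = 1
      have hd1 : d ≤ 1 := by
        apply key
        omega
      have : Real.logb 2 ((1:ℕ) : ℝ) = 0 := by norm_num
      rw [← hn1, this]
      calc (d : ℝ) ≤ 1 := by exact_mod_cast hd1
        _ = 1 + 0 := by ring
    · have h2' : 2 ≤ n := h2
      refine (main h2').trans ?_
      have : (0:ℝ) < (n : ℝ) - 1 := by
        have : (2:ℝ) ≤ (n : ℝ) := by exact_mod_cast h2'
        linarith
      have := Real.logb_le_logb_of_le (by norm_num : (1:ℝ) < 2) this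
        (by linarith : (n : ℝ) - 1 ≤ (n : ℝ))
      linarith
  · exact main
end
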